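/- Let g : ℝⁿ → ℝ be Lipschitz continuous with constant L > 0 and let Z ⊆ {x : g(x) = 0} be a nonempty set. Let δ > 0 and 0 < λ ≤ δ/(2L), and set M := {x ∈ ℝⁿ : dist(x, Z) ≤ λ/2}. Let (g_k) be continuously differentiable functions satisfying ‖∇g_k(x)‖ + |g_k(x)| ≥ δ for all x ∈ M and all k, and sup_{x ∈ M} |g_k(x) − g(x)| → 0 as k → ∞. Then there exists k₀ such that for all k ≥ k₀ and all x ∈ M one has ‖∇g_k(x)‖ ≥ δ/2. In particular, for k ≥ k₀ the function g_k has no local extremum point in the interior of M. -/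
import Mathlib


open Set Topology Filter Metric

/-- The key estimate (3.14) in Lemma 3.7: if `g` is `L`-Lipschitz, `Z ⊆ {g = 0}` is
nonempty, `0 < λ ≤ δ/(2L)`, `M` is the closed `λ/2`-tube around `Z`, the `C¹` functions
`g_k` satisfy `‖∇g_k‖ + |g_k| ≥ δ` on `M` and converge uniformly to `g` on `M`, then
eventually `‖∇g_k‖ ≥ δ/2` on `M`; in particular `g_k` has no local extremum point in
the interior of `M`. -/
theorem gradient_lower_bound_in_tube
    {n : ℕ} (g : EuclideanSpace ℝ (Fin n) → ℝ) (L : ℝ) (hL : 0 < L)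
    (hLip : ∀ a b, |g a - g b| ≤ L * ‖a - b‖)
    (Z : Set (EuclideanSpace ℝ (Fin n))) (hZ : Z.Nonempty)
    (hZ0 : Z ⊆ {x | g x = 0})
    (δ lam : ℝ) (hδ : 0 < δ) (hlam : 0 < lam) (hlamδ : lam ≤ δ / (2 * L))
    (M : Set (EuclideanSpace ℝ (Fin n)))
    (hM : M = {x | infDist x Z ≤ lam / 2})
    (gk : ℕ → EuclideanSpace ℝ (Fin n) → ℝ) (hgk : ∀ k, ContDiff ℝ 1 (gk k))
    (hnondeg : ∀ k, ∀ x ∈ M, δ ≤ ‖gradient (gk k) x‖ + |gk k x|)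
    (hconv : ∀ ε > 0, ∃ k₀ : ℕ, ∀ k ≥ k₀, ∀ x ∈ M, |gk k x - g x| < ε) :
    ∃ k₀ : ℕ, ∀ k ≥ k₀,
      (∀ x ∈ M, δ / 2 ≤ ‖gradient (gk k) x‖) ∧
      (∀ x ∈ interior M, ¬ IsLocalExtr (gk k) x) := by
  obtain ⟨k₀, hk₀⟩ := hconv (δ/4) (by linarith)
  have hgM : ∀ x ∈ M, |g x| ≤ δ/4 := by
    intro x hx
    rw [hM] at hx
    have h1 : |g x| / L ≤ infDist x Z := by
      by_contra h
      push_neg at h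
      obtain ⟨z, hz, hd⟩ := (infDist_lt_iff hZ).1 h
      have := hLip x z
      rw [hZ0 hz, sub_zero] at this
      rw [lt_div_iff₀ hL] at hd
      rw [dist_eq_norm] at hd
      nlinarith
    have h2 : |g x| ≤ L * (lam / 2) := by
      rw [div_le_iff₀ hL] at h1
      calc |g x| ≤ infDist x Z * L := h1
        _ ≤ lam / 2 * L := by
            exact mul_le_mul_of_nonneg_right hx hL.le
        _ = L * (lam / 2) := mul_comm _ _
    have h3 : L * lam ≤ δ / 2 := by
      rw [le_div_iff₀ (by positivity : (0:ℝ) < 2 * L)] at hlamδ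
      nlinarith
    nlinarith
  refine ⟨k₀, fun k hk => ?_⟩
  have key : ∀ x ∈ M, δ / 2 ≤ ‖gradient (gk k) x‖ := by
    intro x hx
    have h1 := hk₀ k hk x hx
    have h2 := hgM x hx
    have h3 := hnondeg k x hx
    have h4 : |gk k x| ≤ δ/2 := by
      have := abs_sub_abs_le_abs_sub (gk k x) (g x)
      nlinarith
    linarith
  refine ⟨key, fun x hx hext => ?_⟩
  have hxM : x ∈ M := interior_subset hx
  have h0 : gradient (gk k) x = 0 := by
    unfold gradient
    rw [hext.fderiv_eq_zero]
    simp
  have := key x hxM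
  rw [h0, norm_zero] at this
  linarith
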